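/- arXiv:2407.13489 — 2 statements merged into one kernel-verified Lean document; each statement's English description precedes it below -/
import Mathlib

section
/- Let (X, G, σ) be the self-similar dynamical system in ℓ^∞ with contraction ratio 0 < c < 1 and metric d, let {F_n} be a Følner sequence in G, and let D ≥ 1 be a constant with diam(X, d) < D. Then for every natural number n, every 0 < ε < 1 and every point q ∈ X, there exists a map φ : X → B̄_{d_{F_n}}(q, ε) (the closed ε-ball around q for the metric d_{F_n}) such that d_{F_n}(φ(x), φ(y)) ≥ (cε/D)·d_{F_n}(x, y) for all x, y ∈ X. -/
open Filter Set Topology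
open scoped ENNReal

noncomputable section

namespace MeanDimPaper

/-- Diameter of a set with respect to a distance function `ρ`. -/
def diamR {X : Type*} (ρ : X → X → ℝ) (E : Set X) : ℝ :=
  sSup ((fun p : X × X => ρ p.1 p.2) '' (E ×ˢ E))

/-- Minimal number of open sets of `ρ`-diameter `< ε` needed to cover `A`
(the `ε`-covering number `#(A, ρ, ε)`). -/
def covNumOn {X : Type*} [TopologicalSpace X] (ρ : X → X → ℝ) (A : Set X) (ε : ℝ) : ℕ :=
  sInf {n : ℕ | ∃ U : Fin n → Set X,
    (∀ i, IsOpen (U i)) ∧ (∀ i, diamR ρ (U i) < ε) ∧ A ⊆ ⋃ i, U i}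

/-- The `ε`-scale `s`-dimensional Hausdorff pre-measure `H^s_ε(A, ρ)`. -/
def hausPre {X : Type*} (ρ : X → X → ℝ) (A : Set X) (s ε : ℝ) : ℝ≥0∞ :=
  ⨅ (E : ℕ → Set X) (_ : A ⊆ (⋃ i, E i) ∧ ∀ i, diamR ρ (E i) < ε),
    ∑' i, ENNReal.ofReal (diamR ρ (E i) ^ s)

/-- The `ε`-scale Hausdorff dimension `dim_H(A, ρ, ε) = sup{s ≥ 0 : H^s_ε ≥ 1}`. -/
def dimHof {X : Type*} (ρ : X → X → ℝ) (A : Set X) (ε : ℝ) : ℝ :=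
  sSup {s : ℝ | 0 ≤ s ∧ 1 ≤ hausPre ρ A s ε}

/-- Dynamical (Bowen) distance `d_F(x,y) = max_{g ∈ F} ρ(gx, gy)`. -/
def dynDist {X G : Type*} (ρ : X → X → ℝ) (act : G → X → X) (F : Finset G) (x y : X) : ℝ :=
  sSup ((fun g => ρ (act g x) (act g y)) '' (F : Set G))

/-- Upper mean Hausdorff dimension w.r.t. a Følner sequence `F`:
`lim_{ε→0} limsup_{n→∞} dim_H(A, d_{F_n}, ε)/|F_n|` (the monotone limit as `ε → 0`
is expressed as a `limsup` along `𝓝[>] 0`). -/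
def upperMdimH {X G : Type*} (ρ : X → X → ℝ) (act : G → X → X)
    (F : ℕ → Finset G) (A : Set X) : EReal :=
  limsup (fun ε : ℝ =>
      limsup (fun n : ℕ => ((dimHof (dynDist ρ act (F n)) A ε / (F n).card : ℝ) : EReal)) atTop)
    (𝓝[>] (0 : ℝ))

/-- Lower mean Hausdorff dimension: `lim_{ε→0} liminf_{n→∞} dim_H(A, d_{F_n}, ε)/|F_n|`. -/
def lowerMdimH {X G : Type*} (ρ : X → X → ℝ) (act : G → X → X)
    (F : ℕ → Finset G) (A : Set X) : EReal :=
  limsup (fun ε : ℝ =>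
      liminf (fun n : ℕ => ((dimHof (dynDist ρ act (F n)) A ε / (F n).card : ℝ) : EReal)) atTop)
    (𝓝[>] (0 : ℝ))

/-- `S(A, G, ρ, ε)/log(1/ε) = lim_n log #(A, d_{F_n}, ε)/(|F_n| log(1/ε))`
(the limit over `n` exists by the Ornstein–Weiss lemma; it is expressed as a `limsup`). -/
def mdimMRate {X G : Type*} [TopologicalSpace X] (ρ : X → X → ℝ) (act : G → X → X)
    (F : ℕ → Finset G) (A : Set X) (ε : ℝ) : EReal :=
  limsup (fun n : ℕ =>
    ((Real.log (covNumOn (dynDist ρ act (F n)) A ε) /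
        ((F n).card * Real.log (1 / ε)) : ℝ) : EReal)) atTop

/-- Upper metric mean dimension. -/
def upperMdimM {X G : Type*} [TopologicalSpace X] (ρ : X → X → ℝ) (act : G → X → X)
    (F : ℕ → Finset G) (A : Set X) : EReal :=
  limsup (fun ε : ℝ => mdimMRate ρ act F A ε) (𝓝[>] (0 : ℝ))

/-- Lower metric mean dimension. -/
def lowerMdimM {X G : Type*} [TopologicalSpace X] (ρ : X → X → ℝ) (act : G → X → X)
    (F : ℕ → Finset G) (A : Set X) : EReal :=
  liminf (fun ε : ℝ => mdimMRate ρ act F A ε) (𝓝[>] (0 : ℝ))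

/-- Topological entropy of the `G`-system `(A, act)`:
`lim_{ε→0} lim_n log #(A, d_{F_n}, ε)/|F_n|`. -/
def hTop {X G : Type*} [TopologicalSpace X] (ρ : X → X → ℝ) (act : G → X → X)
    (F : ℕ → Finset G) (A : Set X) : EReal :=
  limsup (fun ε : ℝ =>
      limsup (fun n : ℕ =>
        ((Real.log (covNumOn (dynDist ρ act (F n)) A ε) / (F n).card : ℝ) : EReal)) atTop)
    (𝓝[>] (0 : ℝ))

/-- The Bowen distance of a `G × ℕ`-action over `F × {0, …, N-1}`. -/
def dynDist2 {X G : Type*} (ρ : X → X → ℝ) (act : G → X → X) (T : X → X)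
    (F : Finset G) (N : ℕ) (x y : X) : ℝ :=
  sSup ((fun p : G × ℕ => ρ (act p.1 (T^[p.2] x)) (act p.1 (T^[p.2] y))) ''
    ((F : Set G) ×ˢ (Iio N)))

/-- Topological entropy of a `G × ℕ`-action:
`lim_{ε→0} lim_n log #(A, d^{S,T}_{F_n × F'_n}, ε)/(n |F_n|)`. -/
def hTop2 {X G : Type*} [TopologicalSpace X] (ρ : X → X → ℝ) (act : G → X → X) (T : X → X)
    (F : ℕ → Finset G) (A : Set X) : EReal :=
  limsup (fun ε : ℝ =>
      limsup (fun n : ℕ =>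
        ((Real.log (covNumOn (dynDist2 ρ act T (F n) n) A ε) / (n * (F n).card) : ℝ) : EReal))
        atTop)
    (𝓝[>] (0 : ℝ))

/-- The weighted covering quantity `#^w(π, A, ρX, ρY, ε)` of a factor map. -/
def wCovNum {X Y : Type*} [TopologicalSpace X] [TopologicalSpace Y] (π : X → Y)
    (ρX : X → X → ℝ) (ρY : Y → Y → ℝ) (A : Set X) (B : Set Y) (w ε : ℝ) : ℝ :=
  sInf {r : ℝ | ∃ (t : ℕ) (V : Fin t → Set Y), (∀ k, IsOpen (V k)) ∧
      (∀ k, diamR ρY (V k) < ε) ∧ B ⊆ (⋃ k, V k) ∧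
      r = ∑ k, (covNumOn ρX (A ∩ π ⁻¹' (V k)) ε : ℝ) ^ w}

/-- The `w`-weighted topological entropy `h_top^w(π, G)` of a factor map `π`. -/
def hTopW {X Y G : Type*} [TopologicalSpace X] [TopologicalSpace Y] (π : X → Y)
    (ρX : X → X → ℝ) (ρY : Y → Y → ℝ) (actX : G → X → X) (actY : G → Y → Y)
    (F : ℕ → Finset G) (A : Set X) (B : Set Y) (w : ℝ) : EReal :=
  limsup (fun ε : ℝ =>
      limsup (fun n : ℕ =>
        ((Real.log (wCovNum π (dynDist ρX actX (F n)) (dynDist ρY actY (F n)) A B w ε) /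
            (F n).card : ℝ) : EReal)) atTop)
    (𝓝[>] (0 : ℝ))

/-- A Følner sequence in a group `G`. -/
def IsFolner {G : Type*} [Group G] [DecidableEq G] (F : ℕ → Finset G) : Prop :=
  (∀ n, (F n).Nonempty) ∧
    ∀ g : G, Tendsto
      (fun n => (((F n) \ ((F n).image (fun x => g * x))).card : ℝ) / (F n).card)
      atTop (𝓝 0)

/-- The (right) shift: `σ^h(x)_g = x_{gh}`. -/
def shiftAct {G Λ : Type*} [Mul G] (h : G) (x : G → Λ) : G → Λ := fun g => x (g * h)

/-- Word length w.r.t. a generating set `S`. -/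
def wordLength {G : Type*} [Group G] (S : Finset G) (g : G) : ℕ :=
  sInf {n : ℕ | ∃ l : List G, l.length = n ∧ (∀ x ∈ l, x ∈ S) ∧ l.prod = g}

/-- The ball `B_S(m) = {g : ℓ_S(g) ≤ m}`, as a finset (defined recursively). -/
def ballS {G : Type*} [Group G] [DecidableEq G] (S : Finset G) : ℕ → Finset G
  | 0 => {1}
  | (m + 1) => ballS S m ∪ Finset.image₂ (· * ·) (ballS S m) S

open Classical in
/-- The metric `d(x, y) = 2^{-min{ℓ_S(g) : x_g ≠ y_g}}` on a full shift. -/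
def shiftDist {G Λ : Type*} [Group G] (S : Finset G) (x y : G → Λ) : ℝ :=
  if x = y then 0
  else (2 : ℝ) ^ (-((sInf {n : ℕ | ∃ g, x g ≠ y g ∧ wordLength S g = n} : ℕ) : ℤ))

/-- The carpet system `X_Ω ⊆ [0,1]^G × [0,1]^G`. -/
def carpetSet {G : Type*} (a b : ℕ) (Ω : Set (G → Fin a × Fin b)) :
    Set ((G → ℝ) × (G → ℝ)) :=
  {p | ∃ z : ℕ → (G → Fin a × Fin b), (∀ m, z m ∈ Ω) ∧
        (∀ g, p.1 g = ∑' m : ℕ, ((z m g).1 : ℝ) / (a : ℝ) ^ (m + 1)) ∧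
        (∀ g, p.2 g = ∑' m : ℕ, ((z m g).2 : ℝ) / (b : ℝ) ^ (m + 1))}

/-- Metric on `[0,1]^G × [0,1]^G`: `d((x,y),(x',y')) = Σ_g α_g max(|x_g-x'_g|, |y_g-y'_g|)`. -/
def carpetDist {G : Type*} (α : G → ℝ) (p q : (G → ℝ) × (G → ℝ)) : ℝ :=
  ∑' g, α g * max |p.1 g - q.1 g| |p.2 g - q.2 g|

/-- The shift on `[0,1]^G × [0,1]^G`. -/
def shiftPair {G : Type*} [Mul G] (h : G) (p : (G → ℝ) × (G → ℝ)) : (G → ℝ) × (G → ℝ) :=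
  (shiftAct h p.1, shiftAct h p.2)

/-- The metric `d(x,y) = Σ_g α_g |x_g - y_g|` on (a bounded subset of) `ℝ^G`. -/
def sumDist {G : Type*} (α : G → ℝ) (x y : G → ℝ) : ℝ := ∑' g, α g * |x g - y g|

/-- The metric `d(x,y) = Σ_g α_g ρ(x_g, y_g)` on `(ℝ/ℤ)^G`. -/
def torusDist {G : Type*} (α : G → ℝ) (x y : G → AddCircle (1 : ℝ)) : ℝ :=
  ∑' g, α g * dist (x g) (y g)

/-- `Widim_ε(A, ρ) ≤ n`: there is an `ε`-embedding of `A` into an at most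
`n`-dimensional simplicial complex. -/
def widimLE {X : Type*} [TopologicalSpace X] (ρ : X → X → ℝ) (A : Set X) (ε : ℝ) (n : ℕ) :
    Prop :=
  ∃ (K : Geometry.SimplicialComplex ℝ (ℕ → ℝ)) (f : A → K.space), Continuous f ∧
    (∀ s ∈ K.faces, s.card ≤ n + 1) ∧
    ∀ y : K.space, diamR (fun u v : A => ρ u.1 v.1) (f ⁻¹' {y}) < ε

/-- `Widim_ε(A, ρ)`. -/
def widimOn {X : Type*} [TopologicalSpace X] (ρ : X → X → ℝ) (A : Set X) (ε : ℝ) : ℕ :=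
  sInf {n : ℕ | widimLE ρ A ε n}

/-- Mean (topological) dimension `mdim(A, G) = lim_{ε→0} lim_n Widim_ε(A, d_{F_n})/|F_n|`. -/
def mdim {X G : Type*} [TopologicalSpace X] (ρ : X → X → ℝ) (act : G → X → X)
    (F : ℕ → Finset G) (A : Set X) : EReal :=
  limsup (fun ε : ℝ =>
      limsup (fun n : ℕ =>
        (((widimOn (dynDist ρ act (F n)) A ε : ℝ) / (F n).card : ℝ) : EReal)) atTop)
    (𝓝[>] (0 : ℝ))

/-- For the self-similar dynamical system `(X, G, σ)` in `ℓ^∞` with contraction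
ratio `0 < c < 1`, metric `d`, and a constant `D ≥ 1` with `diam(X,d) < D`: for every `n`,
every `0 < ε < 1` and every `q ∈ X`, there is a map `φ : X → B̄_{d_{F_n}}(q, ε)` such that
`d_{F_n}(φ(x), φ(y)) ≥ (cε/D)·d_{F_n}(x, y)` for all `x, y ∈ X`. -/
theorem selfSimilar_contraction_into_ball
    {G : Type*} [Group G] [DecidableEq G] [Countable G]
    {Ω : Type*} [MetricSpace Ω] [CompactSpace Ω] [Nonempty Ω]
    (T : G → Ω → Ω) (hT_cont : ∀ g, Continuous (T g))
    (hT_one : ∀ ω, T 1 ω = ω)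
    (hT_mul : ∀ g h ω, T g (T h ω) = T (g * h) ω)
    (H : Ω → G → ℝ) (hH_cont : Continuous H)
    (hH_bdd : ∃ C : ℝ, ∀ ω g, |H ω g| ≤ C)
    (hH_equiv : ∀ (g : G) (ω : Ω), shiftAct g (H ω) = H (T g ω))
    (c : ℝ) (hc0 : 0 < c) (hc1 : c < 1)
    (X : Set (G → ℝ)) (hX_ne : X.Nonempty) (hX_cpt : IsCompact X)
    (hX_self : X = ⋃ ω : Ω, (fun x : G → ℝ => fun g => c * x g + H ω g) '' X)
    (hX_inv : ∀ g : G, shiftAct g '' X ⊆ X)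
    (α : G → ℝ) (hα_pos : ∀ g, 0 < α g) (hα_one : α 1 = 1) (hα_sum : Summable α)
    (F : ℕ → Finset G) (hF : IsFolner F)
    (D : ℝ) (hD : 1 ≤ D) (hdiam : diamR (sumDist α) X < D)
    (n : ℕ) (ε : ℝ) (hε0 : 0 < ε) (hε1 : ε < 1) (q : G → ℝ) (hq : q ∈ X) :
    ∃ φ : (G → ℝ) → (G → ℝ),
      (∀ x ∈ X, φ x ∈ X) ∧
      (∀ x ∈ X, dynDist (sumDist α) shiftAct (F n) q (φ x) ≤ ε) ∧
      ∀ x ∈ X, ∀ y ∈ X,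
        c * ε / D * dynDist (sumDist α) shiftAct (F n) x y ≤
          dynDist (sumDist α) shiftAct (F n) (φ x) (φ y) := by
  classical
  obtain ⟨C, hC⟩ := hH_bdd
  have hC0 : 0 ≤ C := le_trans (abs_nonneg _) (hC (Classical.arbitrary Ω) 1)
  have h1c : 0 < 1 - c := by linarith
  have hD0 : (0 : ℝ) < D := by linarith
  -- decomposition choice
  have hstep : ∀ x : G → ℝ, ∃ p : Ω × (G → ℝ), x ∈ X →
      p.2 ∈ X ∧ ∀ g, x g = c * p.2 g + H p.1 g := by
    intro x
    by_cases hx : x ∈ X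
    · have hx' : x ∈ ⋃ ω : Ω, (fun x : G → ℝ => fun g => c * x g + H ω g) '' X := by
        rwa [← hX_self]
      obtain ⟨ω, y, hy, hxy⟩ := Set.mem_iUnion.mp hx'
      exact ⟨(ω, y), fun _ => ⟨hy, fun g => (congrFun hxy g).symm⟩⟩
    · exact ⟨(Classical.arbitrary Ω, x), fun h => absurd h hx⟩
  choose nxt hnxt using hstep
  have hSmem : ∀ (ω : Ω) (x : G → ℝ), x ∈ X → (fun g => c * x g + H ω g) ∈ X := by
    intro ω x hx
    rw [hX_self]
    exact Set.mem_iUnion.mpr ⟨ω, ⟨x, hx, rfl⟩⟩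
  let qs : ℕ → (G → ℝ) := fun k => Nat.rec q (fun _ p => (nxt p).2) k
  let Φ : ℕ → (G → ℝ) → (G → ℝ) :=
    fun k => Nat.rec id (fun k' f => fun x => f (fun g => c * x g + H (nxt (qs k')).1 g)) k
  have hqsX : ∀ k, qs k ∈ X := by
    intro k
    induction k with
    | zero => exact hq
    | succ k ih => exact (hnxt (qs k) ih).1
  have hΦX : ∀ (k : ℕ) (x : G → ℝ), x ∈ X → Φ k x ∈ X := by
    intro k
    induction k with
    | zero => intro x hx; exact hx
    | succ k ih => intro x hx; exact ih _ (hSmem _ _ hx)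
  have hΦq : ∀ k, Φ k (qs k) = q := by
    intro k
    induction k with
    | zero => rfl
    | succ k ih =>
      have h : (fun g => c * qs (k + 1) g + H (nxt (qs k)).1 g) = qs k := by
        funext g; exact ((hnxt (qs k) (hqsX k)).2 g).symm
      calc Φ (k + 1) (qs (k + 1))
          = Φ k (fun g => c * qs (k + 1) g + H (nxt (qs k)).1 g) := rfl
        _ = Φ k (qs k) := by rw [h]
        _ = q := ih
  have hpt : ∀ (k : ℕ) (x y : G → ℝ) (g : G),
      |Φ k x g - Φ k y g| = c ^ k * |x g - y g| := by
    intro k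
    induction k with
    | zero =>
      intro x y g
      show |x g - y g| = c ^ 0 * |x g - y g|
      rw [pow_zero, one_mul]
    | succ k ih =>
      intro x y g
      have h1 : Φ (k + 1) x = Φ k (fun g => c * x g + H (nxt (qs k)).1 g) := rfl
      have h2 : Φ (k + 1) y = Φ k (fun g => c * y g + H (nxt (qs k)).1 g) := rfl
      rw [h1, h2, ih]
      have h3 : (c * x g + H (nxt (qs k)).1 g) - (c * y g + H (nxt (qs k)).1 g)
          = c * (x g - y g) := by ring
      rw [h3, abs_mul, abs_of_pos hc0]
      ring
  -- uniform coordinate bound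
  have hcoord : ∀ (g : G) (x : G → ℝ), x ∈ X → |x g| ≤ C / (1 - c) := by
    intro g
    have hcont : Continuous fun x : G → ℝ => |x g| := (continuous_apply g).abs
    obtain ⟨Mg, hMg⟩ := (hX_cpt.image hcont).bddAbove
    have hMg' : ∀ x ∈ X, |x g| ≤ Mg := fun x hx => hMg ⟨x, hx, rfl⟩
    have hdivnn : 0 ≤ C / (1 - c) := div_nonneg hC0 h1c.le
    have hcc : c * (C / (1 - c)) + C = C / (1 - c) := by
      field_simp
      ring
    have key : ∀ k : ℕ, ∀ x ∈ X, |x g| ≤ c ^ k * Mg + C / (1 - c) := by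
      intro k
      induction k with
      | zero =>
        intro x hx
        have := hMg' x hx
        rw [pow_zero, one_mul]
        linarith
      | succ k ih =>
        intro x hx
        obtain ⟨hy, heq⟩ := hnxt x hx
        have h1 : |x g| ≤ c * |(nxt x).2 g| + C := by
          rw [heq g]
          calc |c * (nxt x).2 g + H (nxt x).1 g|
              ≤ |c * (nxt x).2 g| + |H (nxt x).1 g| := abs_add_le _ _
            _ ≤ c * |(nxt x).2 g| + C := by
                rw [abs_mul, abs_of_pos hc0]
                exact add_le_add_right (hC _ _) _
        have h2 := ih _ hy
        have h3 : c * |(nxt x).2 g| ≤ c * (c ^ k * Mg + C / (1 - c)) :=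
          mul_le_mul_of_nonneg_left h2 hc0.le
        calc |x g| ≤ c * (c ^ k * Mg + C / (1 - c)) + C := by linarith
          _ = c ^ (k + 1) * Mg + (c * (C / (1 - c)) + C) := by ring
          _ = c ^ (k + 1) * Mg + C / (1 - c) := by rw [hcc]
    intro x hx
    have hlim : Tendsto (fun k : ℕ => c ^ k * Mg + C / (1 - c)) atTop
        (𝓝 (0 * Mg + C / (1 - c))) :=
      ((tendsto_pow_atTop_nhds_zero_of_lt_one hc0.le hc1).mul_const Mg).add tendsto_const_nhds
    have := ge_of_tendsto' hlim (fun k => key k x hx)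
    simpa using this
  have hshift : ∀ (g : G) (x : G → ℝ), x ∈ X → shiftAct g x ∈ X :=
    fun g x hx => hX_inv g ⟨x, hx, rfl⟩
  have hsd_nonneg : ∀ x y : G → ℝ, 0 ≤ sumDist α x y :=
    fun x y => tsum_nonneg fun g => mul_nonneg (hα_pos g).le (abs_nonneg _)
  have hsdle : ∀ x ∈ X, ∀ y ∈ X, sumDist α x y ≤ ∑' g, α g * (2 * (C / (1 - c))) := by
    intro x hx y hy
    have hb : ∀ g, α g * |x g - y g| ≤ α g * (2 * (C / (1 - c))) := by
      intro g
      have h1 := hcoord g x hx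
      have h2 := hcoord g y hy
      have h3 : |x g - y g| ≤ 2 * (C / (1 - c)) := by
        have := abs_sub (x g) (y g)
        linarith
      exact mul_le_mul_of_nonneg_left h3 (hα_pos g).le
    exact Summable.tsum_le_tsum hb
      (Summable.of_nonneg_of_le (fun g => mul_nonneg (hα_pos g).le (abs_nonneg _)) hb
        (hα_sum.mul_right _))
      (hα_sum.mul_right _)
  have hDle : ∀ x ∈ X, ∀ y ∈ X, sumDist α x y ≤ D := by
    intro x hx y hy
    have hbdd : BddAbove ((fun p : (G → ℝ) × (G → ℝ) => sumDist α p.1 p.2) '' (X ×ˢ X)) := by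
      refine ⟨∑' g, α g * (2 * (C / (1 - c))), ?_⟩
      rintro t ⟨⟨a, b⟩, ⟨ha, hb⟩, rfl⟩
      exact hsdle a ha b hb
    have hmem : sumDist α x y ∈
        (fun p : (G → ℝ) × (G → ℝ) => sumDist α p.1 p.2) '' (X ×ˢ X) :=
      ⟨(x, y), ⟨hx, hy⟩, rfl⟩
    have h1 : sumDist α x y ≤ diamR (sumDist α) X := le_csSup hbdd hmem
    linarith
  have hscale : ∀ (k : ℕ) (x y : G → ℝ) (g : G),
      sumDist α (shiftAct g (Φ k x)) (shiftAct g (Φ k y)) =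
        c ^ k * sumDist α (shiftAct g x) (shiftAct g y) := by
    intro k x y g
    simp only [sumDist, shiftAct]
    rw [← tsum_mul_left]
    exact tsum_congr fun g' => by rw [hpt k x y (g' * g)]; ring
  -- choose k
  have hεD : 0 < ε / D := div_pos hε0 hD0
  have hex : ∃ m : ℕ, c ^ m < ε / D := exists_pow_lt_of_lt_one hεD hc1
  set k := Nat.find hex with hkdef
  have hk : c ^ k < ε / D := Nat.find_spec hex
  have hk0 : k ≠ 0 := by
    intro h
    have h1 : c ^ k = 1 := by rw [h, pow_zero]
    have hεD1 : ε / D < 1 := lt_of_le_of_lt (div_le_self hε0.le hD) hε1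
    rw [h1] at hk
    linarith
  have hk1 : ε / D ≤ c ^ (k - 1) := by
    have h := Nat.find_min hex (Nat.sub_lt (Nat.pos_of_ne_zero hk0) one_pos)
    push_neg at h
    exact h
  have hkc : c * (ε / D) ≤ c ^ k := by
    have h : c ^ k = c * c ^ (k - 1) := by
      rw [← pow_succ']
      congr 1
      omega
    rw [h]
    exact mul_le_mul_of_nonneg_left hk1 hc0.le
  refine ⟨Φ k, fun x hx => hΦX k x hx, ?_, ?_⟩
  · intro x hx
    unfold dynDist
    apply Real.sSup_le _ hε0.le
    rintro t ⟨g, hg, rfl⟩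
    show sumDist α (shiftAct g q) (shiftAct g (Φ k x)) ≤ ε
    have h1 : sumDist α (shiftAct g q) (shiftAct g (Φ k x)) =
        c ^ k * sumDist α (shiftAct g (qs k)) (shiftAct g x) := by
      rw [← hΦq k]
      exact hscale k (qs k) x g
    rw [h1]
    have h2 : sumDist α (shiftAct g (qs k)) (shiftAct g x) ≤ D :=
      hDle _ (hshift g _ (hqsX k)) _ (hshift g x hx)
    calc c ^ k * sumDist α (shiftAct g (qs k)) (shiftAct g x)
        ≤ c ^ k * D := mul_le_mul_of_nonneg_left h2 (pow_nonneg hc0.le k)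
      _ ≤ (ε / D) * D := mul_le_mul_of_nonneg_right hk.le hD0.le
      _ = ε := div_mul_cancel₀ ε hD0.ne'
  · intro x hx y hy
    have hppos : 0 < c * ε / D := by positivity
    have hple : c * ε / D ≤ c ^ k := by
      rw [mul_div_assoc]
      exact hkc
    unfold dynDist
    obtain ⟨g₀, hg₀⟩ := hF.1 n
    have hS2bdd : BddAbove
        ((fun g => sumDist α (shiftAct g (Φ k x)) (shiftAct g (Φ k y))) '' (F n : Set G)) :=
      ((F n).finite_toSet.image _).bddAbove
    have hS2nn : 0 ≤ sSup
        ((fun g => sumDist α (shiftAct g (Φ k x)) (shiftAct g (Φ k y))) '' (F n : Set G)) :=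
      le_trans (hsd_nonneg _ _) (le_csSup hS2bdd ⟨g₀, hg₀, rfl⟩)
    have hS1le : sSup ((fun g => sumDist α (shiftAct g x) (shiftAct g y)) '' (F n : Set G)) ≤
        sSup ((fun g => sumDist α (shiftAct g (Φ k x)) (shiftAct g (Φ k y))) '' (F n : Set G))
          / (c * ε / D) := by
      apply Real.sSup_le _ (div_nonneg hS2nn hppos.le)
      rintro t ⟨g, hg, rfl⟩
      rw [le_div_iff₀ hppos]
      have h1 : c ^ k * sumDist α (shiftAct g x) (shiftAct g y) ≤
          sSup ((fun g => sumDist α (shiftAct g (Φ k x)) (shiftAct g (Φ k y)))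
            '' (F n : Set G)) := by
        rw [← hscale k x y g]
        exact le_csSup hS2bdd ⟨g, hg, rfl⟩
      have h2 : (c * ε / D) * sumDist α (shiftAct g x) (shiftAct g y) ≤
          c ^ k * sumDist α (shiftAct g x) (shiftAct g y) :=
        mul_le_mul_of_nonneg_right hple (hsd_nonneg _ _)
      calc sumDist α (shiftAct g x) (shiftAct g y) * (c * ε / D)
          = (c * ε / D) * sumDist α (shiftAct g x) (shiftAct g y) := by ring
        _ ≤ c ^ k * sumDist α (shiftAct g x) (shiftAct g y) := h2
        _ ≤ _ := h1
    have := mul_le_mul_of_nonneg_left hS1le hppos.le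
    rwa [mul_div_cancel₀ _ hppos.ne'] at this


end MeanDimPaper
end
end

section
/- Let l and m be natural numbers, and let (x^{(1)}, y^{(1)}), …, (x^{(k)}, y^{(k)}) ∈ (Ω|_{B_S(m)})^ℕ with k ≥ 4^{|B_S(m)|} + 1. Suppose Ψ_{l,m}(x^{(i)}, y^{(i)}) ≠ Ψ_{l,m}(x^{(j)}, y^{(j)}) for all i ≠ j. Then there exist indices i ≠ j such that dist_∞(Φ_{l,m}(x^{(i)}, y^{(i)}), Φ_{l,m}(x^{(j)}, y^{(j)})) ≥ b^{−l}. -/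
open Filter Set Topology
open scoped ENNReal

noncomputable section

namespace MeanDimPaper

/-- Restriction of a configuration to the coordinates in a finite set `D ⊆ G`. -/
def restrTo {G Λ : Type*} (D : Finset G) (x : G → Λ) : {g // g ∈ D} → Λ := fun g => x g.1

/-- The set `Ψ_{l,m}(x,y)`: sequences in `(Ω|_{B_S(m)})^ℕ` whose first `⌊wl⌋` `A`-components
and first `l` `B`-components agree with those of the given sequence (`w = log_a b`). -/
def PsiSet {G : Type*} [Group G] [DecidableEq G] (S : Finset G) (a b : ℕ)
    (Ω : Set (G → Fin a × Fin b)) (m l : ℕ)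
    (z : ℕ → ({g // g ∈ ballS S m} → Fin a × Fin b)) :
    Set (ℕ → ({g // g ∈ ballS S m} → Fin a × Fin b)) :=
  {z' | (∀ n, z' n ∈ restrTo (ballS S m) '' Ω) ∧
    (∀ n < ⌊Real.logb a b * l⌋₊, (fun g => (z' n g).1) = (fun g => (z n g).1)) ∧
    (∀ n < l, (fun g => (z' n g).2) = (fun g => (z n g).2))}

/-- The set `Φ_{l,m}(x,y) ⊆ X_Ω|_{B_S(m)}`: the image of `Ψ_{l,m}(x,y)` under
`(x', y') ↦ (Σ_n x'_n/a^n, Σ_n y'_n/b^n)`. -/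
def PhiSet {G : Type*} [Group G] [DecidableEq G] (S : Finset G) (a b : ℕ)
    (Ω : Set (G → Fin a × Fin b)) (m l : ℕ)
    (z : ℕ → ({g // g ∈ ballS S m} → Fin a × Fin b)) :
    Set (({g // g ∈ ballS S m} → ℝ) × ({g // g ∈ ballS S m} → ℝ)) :=
  (fun z' => (fun g => ∑' n : ℕ, (((z' n g).1 : ℕ) : ℝ) / (a : ℝ) ^ (n + 1),
              fun g => ∑' n : ℕ, (((z' n g).2 : ℕ) : ℝ) / (b : ℝ) ^ (n + 1))) ''
    PsiSet S a b Ω m l z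

/-- The `ℓ^∞`-distance on `(ℝ²)^I`. -/
def supPairDist {I : Type*} (p q : (I → ℝ) × (I → ℝ)) : ℝ :=
  ⨆ i, max |p.1 i - q.1 i| |p.2 i - q.2 i|

/-- `dist(E, F) = inf{ρ(p,q) : p ∈ E, q ∈ F}`. -/
def distInf {P : Type*} (ρ : P → P → ℝ) (E F : Set P) : ℝ :=
  sInf {r : ℝ | ∃ p ∈ E, ∃ q ∈ F, ρ p q = r}

/-- The restricted carpet `X_Ω|_{B_S(m)} ⊆ [0,1]^{B_S(m)} × [0,1]^{B_S(m)}`. -/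
def carpetResSet {G : Type*} [Group G] [DecidableEq G] (S : Finset G) (m : ℕ) (a b : ℕ)
    (Ω : Set (G → Fin a × Fin b)) :
    Set (({g // g ∈ ballS S m} → ℝ) × ({g // g ∈ ballS S m} → ℝ)) :=
  {p | ∃ z : ℕ → ({g // g ∈ ballS S m} → Fin a × Fin b),
        (∀ n, z n ∈ restrTo (ballS S m) '' Ω) ∧
        (∀ g, p.1 g = ∑' n : ℕ, (((z n g).1 : ℕ) : ℝ) / (a : ℝ) ^ (n + 1)) ∧
        (∀ g, p.2 g = ∑' n : ℕ, (((z n g).2 : ℕ) : ℝ) / (b : ℝ) ^ (n + 1))}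

/-- `t_m(v) = #{u ∈ A^{B_S(m)} : (u,v) ∈ Ω|_{B_S(m)}}`. -/
def tmC {G : Type*} [Group G] [DecidableEq G] (S : Finset G) (m : ℕ) (a b : ℕ)
    (Ω : Set (G → Fin a × Fin b)) (v : {g // g ∈ ballS S m} → Fin b) : ℕ :=
  Set.ncard {u : {g // g ∈ ballS S m} → Fin a |
    (fun g => (u g, v g)) ∈ restrTo (ballS S m) '' Ω}

open Classical in
/-- `Z_m = Σ_{v ∈ Ω'|_{B_S(m)}} t_m(v)^w`, where `w = log_a b`. -/
def ZmC {G : Type*} [Group G] [DecidableEq G] (S : Finset G) (m : ℕ) (a b : ℕ)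
    (Ω : Set (G → Fin a × Fin b)) : ℝ :=
  ∑ v ∈ Finset.univ.filter (fun v : {g // g ∈ ballS S m} → Fin b =>
      v ∈ restrTo (ballS S m) '' ((fun (x : G → Fin a × Fin b) (g : G) => (x g).2) '' Ω)),
    (tmC S m a b Ω v : ℝ) ^ (Real.logb a b)

/-- `f_m(u, v) = t_m(v)^{w-1}/Z_m`, the weight of the probability measure on `Ω|_{B_S(m)}`. -/
def fmC {G : Type*} [Group G] [DecidableEq G] (S : Finset G) (m : ℕ) (a b : ℕ)
    (Ω : Set (G → Fin a × Fin b)) (q : {g // g ∈ ballS S m} → Fin a × Fin b) : ℝ :=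
  (tmC S m a b Ω (fun g => (q g).2) : ℝ) ^ (Real.logb a b - 1) / ZmC S m a b Ω


private def Jd (a : ℕ) (d : ℕ → ℕ) : ℕ → ℕ
  | 0 => 0
  | N+1 => a * Jd a d N + d N

private lemma Jd_congr {a : ℕ} {d e : ℕ → ℕ} :
    ∀ {N : ℕ}, (∀ n < N, d n = e n) → Jd a d N = Jd a e N
  | 0, _ => rfl
  | N+1, h => by
      simp only [Jd, Jd_congr (fun n hn => h n (Nat.lt_succ_of_lt hn)),
        h N (Nat.lt_succ_self N)]

private lemma Jd_inj {a : ℕ} {d e : ℕ → ℕ} (hd : ∀ n, d n < a) (he : ∀ n, e n < a) :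
    ∀ {N : ℕ}, Jd a d N = Jd a e N → ∀ n < N, d n = e n
  | 0, _, n, hn => absurd hn (Nat.not_lt_zero n)
  | N+1, h, n, hn => by
      have ha : 0 < a := Nat.pos_of_ne_zero (by rintro rfl; exact Nat.not_lt_zero _ (hd 0))
      have h2 : a * Jd a d N + d N = a * Jd a e N + e N := h
      have hNd : d N = e N := by
        have := congrArg (· % a) h2
        simpa [Nat.mul_add_mod, Nat.mod_eq_of_lt (hd N), Nat.mod_eq_of_lt (he N)] using this
      rcases Nat.lt_succ_iff_lt_or_eq.1 hn with hn' | rfl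
      · have h3 : a * Jd a d N = a * Jd a e N := by omega
        exact Jd_inj hd he (Nat.eq_of_mul_eq_mul_left ha h3) n hn'
      · exact hNd

private lemma Jd_div {a : ℕ} (ha : 0 < a) (d : ℕ → ℕ) :
    ∀ N : ℕ, ∑ n ∈ Finset.range N, (d n : ℝ) / (a : ℝ) ^ (n + 1) = (Jd a d N : ℝ) / (a : ℝ) ^ N
  | 0 => by simp [Jd]
  | N+1 => by
      have haR : (a : ℝ) ≠ 0 := Nat.cast_ne_zero.2 ha.ne'
      rw [Finset.sum_range_succ, Jd_div ha d N]
      show _ = ((a * Jd a d N + d N : ℕ) : ℝ) / _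
      push_cast
      field_simp
      ring

private lemma geom_partial {r : ℝ} (hr : 1 < r) :
    ∀ N : ℕ, ∑ n ∈ Finset.range N, (r - 1) / r ^ (n + 1) = 1 - (r ^ N)⁻¹
  | 0 => by simp
  | N+1 => by
      have h0 : r ≠ 0 := (lt_trans one_pos hr).ne'
      rw [Finset.sum_range_succ, geom_partial hr N]
      field_simp
      ring

private lemma geom_shift (r : ℝ) (n : ℕ) : (r - 1) / r * r⁻¹ ^ n = (r - 1) / r ^ (n + 1) := by
  rw [div_eq_mul_inv, div_eq_mul_inv, ← inv_pow, pow_succ', mul_assoc]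

private lemma summable_digits {r : ℝ} (hr : 1 < r) {d : ℕ → ℝ}
    (h0 : ∀ n, 0 ≤ d n) (h1 : ∀ n, d n ≤ r - 1) :
    Summable (fun n => d n / r ^ (n + 1)) := by
  have hr0 : 0 < r := lt_trans one_pos hr
  have hg : Summable (fun n : ℕ => ((r - 1) / r) * (r⁻¹) ^ n) := by
    refine Summable.mul_left _ (summable_geometric_of_lt_one (by positivity) ?_)
    rw [inv_lt_one_iff₀]; right; exact hr
  refine Summable.of_nonneg_of_le (fun n => div_nonneg (h0 n) (by positivity)) (fun n => ?_) hg
  rw [geom_shift]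
  exact (div_le_div_iff_of_pos_right (by positivity)).2 (h1 n)

private lemma tsum_geom_one {r : ℝ} (hr : 1 < r) :
    ∑' n : ℕ, (r - 1) / r ^ (n + 1) = 1 := by
  have hr0 : 0 < r := lt_trans one_pos hr
  have hr1 : r - 1 ≠ 0 := by linarith
  have h1 : (r⁻¹ : ℝ) < 1 := by rw [inv_lt_one_iff₀]; right; exact hr
  have heq : (fun n : ℕ => (r - 1) / r ^ (n + 1)) = fun n : ℕ => ((r - 1) / r) * (r⁻¹) ^ n := by
    funext n; rw [geom_shift]
  rw [heq, tsum_mul_left, tsum_geometric_of_lt_one (by positivity) h1]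
  rw [div_mul_eq_mul_div, div_eq_one_iff_eq (by positivity)]
  field_simp

private lemma tsum_digits_bounds {r : ℝ} (hr : 1 < r) {d : ℕ → ℝ}
    (h0 : ∀ n, 0 ≤ d n) (h1 : ∀ n, d n ≤ r - 1) (N : ℕ) :
    (∑ n ∈ Finset.range N, d n / r ^ (n + 1)) ≤ (∑' n, d n / r ^ (n + 1)) ∧
    (∑' n, d n / r ^ (n + 1)) ≤ (∑ n ∈ Finset.range N, d n / r ^ (n + 1)) + (r ^ N)⁻¹ := by
  have hf : Summable (fun n => d n / r ^ (n + 1)) := summable_digits hr h0 h1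
  have hh : Summable (fun n : ℕ => (r - 1) / r ^ (n + 1)) :=
    summable_digits hr (fun _ => by linarith) (fun _ => le_rfl)
  constructor
  · exact Summable.sum_le_tsum _ (fun n _ => div_nonneg (h0 n) (by positivity)) hf
  · have e1 := Summable.sum_add_tsum_compl (s := Finset.range N) hf
    have e2 := Summable.sum_add_tsum_compl (s := Finset.range N) hh
    have etail : (∑' n : ↑((Finset.range N : Set ℕ)ᶜ), d ↑n / r ^ ((n : ℕ) + 1)) ≤
        ∑' n : ↑((Finset.range N : Set ℕ)ᶜ), (r - 1) / r ^ ((n : ℕ) + 1) := by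
      refine Summable.tsum_le_tsum (fun n => ?_) (hf.subtype _) (hh.subtype _)
      exact (div_le_div_iff_of_pos_right (by positivity)).2 (h1 _)
    rw [geom_partial hr N, tsum_geom_one hr] at e2
    linarith

/-- If `(x^{(1)},y^{(1)}), …, (x^{(k)},y^{(k)}) ∈ (Ω|_{B_S(m)})^ℕ` with
`k ≥ 4^{|B_S(m)|} + 1` determine pairwise distinct sets `Ψ_{l,m}`, then two of the associated
sets `Φ_{l,m}` are at `ℓ^∞`-distance at least `b^{-l}`. -/
theorem PhiSet_separation
    {G : Type*} [Group G] [DecidableEq G] [Countable G]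
    (S : Finset G) (hS_ne : S.Nonempty) (hS_symm : ∀ s ∈ S, s⁻¹ ∈ S)
    (hS_gen : Subgroup.closure (S : Set G) = ⊤)
    (hFolner : IsFolner (fun m => ballS S m))
    (a b : ℕ) (hb : 2 ≤ b) (hab : b ≤ a)
    (α : G → ℝ) (hα_pos : ∀ g, 0 < α g) (hα_one : α 1 = 1) (hα_sum : Summable α)
    (Ω : Set (G → Fin a × Fin b)) (hΩ_ne : Ω.Nonempty) (hΩ_closed : IsClosed Ω)
    (hΩ_inv : ∀ h : G, shiftAct h '' Ω ⊆ Ω)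
    (l m : ℕ) (k : ℕ) (hk : 4 ^ (ballS S m).card + 1 ≤ k)
    (z : Fin k → ℕ → ({g // g ∈ ballS S m} → Fin a × Fin b))
    (hz : ∀ i n, z i n ∈ restrTo (ballS S m) '' Ω)
    (hsep : ∀ i j, i ≠ j → PsiSet S a b Ω m l (z i) ≠ PsiSet S a b Ω m l (z j)) :
    ∃ i j, i ≠ j ∧
      (b : ℝ) ^ (-(l : ℤ)) ≤
        distInf supPairDist (PhiSet S a b Ω m l (z i)) (PhiSet S a b Ω m l (z j)) := by
  classical
  have ha2 : 2 ≤ a := le_trans hb hab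
  have haR : (1:ℝ) < (a:ℝ) := by exact_mod_cast lt_of_lt_of_le Nat.one_lt_two ha2
  have hbR : (1:ℝ) < (b:ℝ) := by exact_mod_cast lt_of_lt_of_le Nat.one_lt_two hb
  set N : ℕ := ⌊Real.logb a b * l⌋₊ with hNdef
  -- power comparison: a^N ≤ b^l
  have hpow : (a:ℝ) ^ N ≤ (b:ℝ) ^ l := by
    have hw0 : 0 ≤ Real.logb a b * (l:ℝ) :=
      mul_nonneg (Real.logb_nonneg haR (by exact_mod_cast hbR.le)) (Nat.cast_nonneg l)
    calc (a:ℝ) ^ N = (a:ℝ) ^ (N:ℝ) := (Real.rpow_natCast _ N).symm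
      _ ≤ (a:ℝ) ^ (Real.logb a b * (l:ℝ)) := by
          apply Real.rpow_le_rpow_of_exponent_le haR.le
          rw [hNdef]
          exact_mod_cast Nat.floor_le hw0
      _ = (b:ℝ) ^ (l:ℝ) := by
          rw [Real.rpow_mul (by positivity), Real.rpow_logb (by positivity) haR.ne'
            (by positivity)]
      _ = (b:ℝ) ^ l := Real.rpow_natCast _ l
  have haNpos : (0:ℝ) < (a:ℝ) ^ N := by positivity
  have hblpos : (0:ℝ) < (b:ℝ) ^ l := by positivity
  have htb : ((b:ℝ) ^ l)⁻¹ ≤ ((a:ℝ) ^ N)⁻¹ := by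
    apply inv_anti₀ haNpos hpow
  -- pigeonhole on parities
  have hcard : Fintype.card ({g // g ∈ ballS S m} → ZMod 2 × ZMod 2) < Fintype.card (Fin k) := by
    rw [Fintype.card_fun, Fintype.card_fin]
    have h4 : Fintype.card (ZMod 2 × ZMod 2) = 4 := by
      rw [Fintype.card_prod, ZMod.card]
    rw [h4, Fintype.card_coe]
    exact lt_of_lt_of_le (Nat.lt_succ_self _) hk
  obtain ⟨i, j, hij, hpat⟩ := Fintype.exists_ne_map_eq_of_card_lt
    (fun i (g : {g // g ∈ ballS S m}) =>
      ((Jd a (fun n => ((z i n g).1 : ℕ)) N : ZMod 2),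
       (Jd b (fun n => ((z i n g).2 : ℕ)) l : ZMod 2))) hcard
  refine ⟨i, j, hij, ?_⟩
  -- generic tsum digit bounds
  have hbound : ∀ (r : ℕ), (1:ℝ) < (r:ℝ) → ∀ (M : ℕ) (d : ℕ → ℕ), (∀ n, d n < r) →
      (Jd r d M : ℝ) / (r:ℝ) ^ M ≤ (∑' n : ℕ, ((d n : ℕ) : ℝ) / (r:ℝ) ^ (n+1)) ∧
      (∑' n : ℕ, ((d n : ℕ) : ℝ) / (r:ℝ) ^ (n+1)) ≤
        (Jd r d M : ℝ) / (r:ℝ) ^ M + ((r:ℝ) ^ M)⁻¹ := by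
    intro r hr1 M d hd
    have h0 : ∀ n, (0:ℝ) ≤ (d n : ℝ) := fun n => Nat.cast_nonneg _
    have h1 : ∀ n, (d n : ℝ) ≤ (r:ℝ) - 1 := by
      intro n
      have h' : (d n : ℕ) + 1 ≤ r := hd n
      have h'' : ((d n : ℕ) : ℝ) + 1 ≤ (r:ℝ) := by exact_mod_cast h'
      linarith
    have hB := tsum_digits_bounds hr1 h0 h1 M
    have hrpos : 0 < r := by exact_mod_cast lt_trans zero_lt_one hr1
    rw [Jd_div hrpos d M] at hB
    exact hB
  -- bounds for points of PhiSet
  have hmemx : ∀ (i0 : Fin k) p, p ∈ PhiSet S a b Ω m l (z i0) →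
      ∀ g : {g // g ∈ ballS S m},
      (Jd a (fun n => ((z i0 n g).1 : ℕ)) N : ℝ) / (a:ℝ) ^ N ≤ p.1 g ∧
      p.1 g ≤ (Jd a (fun n => ((z i0 n g).1 : ℕ)) N : ℝ) / (a:ℝ) ^ N + ((a:ℝ) ^ N)⁻¹ := by
    rintro i0 p ⟨z', ⟨hz'Ω, hz'x, hz'y⟩, rfl⟩ g
    have hJeq : Jd a (fun n => ((z' n g).1 : ℕ)) N = Jd a (fun n => ((z i0 n g).1 : ℕ)) N := by
      apply Jd_congr
      intro n hn
      exact congrArg Fin.val (congrFun (hz'x n (hNdef ▸ hn)) g)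
    have hB := hbound a haR N (fun n => ((z' n g).1 : ℕ)) (fun n => (z' n g).1.isLt)
    rw [hJeq] at hB
    exact hB
  have hmemy : ∀ (i0 : Fin k) p, p ∈ PhiSet S a b Ω m l (z i0) →
      ∀ g : {g // g ∈ ballS S m},
      (Jd b (fun n => ((z i0 n g).2 : ℕ)) l : ℝ) / (b:ℝ) ^ l ≤ p.2 g ∧
      p.2 g ≤ (Jd b (fun n => ((z i0 n g).2 : ℕ)) l : ℝ) / (b:ℝ) ^ l + ((b:ℝ) ^ l)⁻¹ := by
    rintro i0 p ⟨z', ⟨hz'Ω, hz'x, hz'y⟩, rfl⟩ g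
    have hJeq : Jd b (fun n => ((z' n g).2 : ℕ)) l = Jd b (fun n => ((z i0 n g).2 : ℕ)) l := by
      apply Jd_congr
      intro n hn
      exact congrArg Fin.val (congrFun (hz'y n hn) g)
    have hB := hbound b hbR l (fun n => ((z' n g).2 : ℕ)) (fun n => (z' n g).2.isLt)
    rw [hJeq] at hB
    exact hB
  -- a differing coordinate exists
  have hdiff : ∃ g : {g // g ∈ ballS S m},
      Jd a (fun n => ((z i n g).1 : ℕ)) N ≠ Jd a (fun n => ((z j n g).1 : ℕ)) N ∨
      Jd b (fun n => ((z i n g).2 : ℕ)) l ≠ Jd b (fun n => ((z j n g).2 : ℕ)) l := by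
    by_contra hcon
    push_neg at hcon
    refine hsep i j hij ?_
    have hx : ∀ n < N, ∀ g : {g // g ∈ ballS S m}, (z i n g).1 = (z j n g).1 := by
      intro n hn g
      exact Fin.val_injective
        (Jd_inj (fun n => (z i n g).1.isLt) (fun n => (z j n g).1.isLt) (hcon g).1 n hn)
    have hy : ∀ n < l, ∀ g : {g // g ∈ ballS S m}, (z i n g).2 = (z j n g).2 := by
      intro n hn g
      exact Fin.val_injective
        (Jd_inj (fun n => (z i n g).2.isLt) (fun n => (z j n g).2.isLt) (hcon g).2 n hn)
    ext z'
    simp only [PsiSet, Set.mem_setOf_eq, ← hNdef]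
    constructor
    · rintro ⟨h1, h2, h3⟩
      exact ⟨h1, fun n hn => (h2 n hn).trans (funext fun g => hx n hn g),
        fun n hn => (h3 n hn).trans (funext fun g => hy n hn g)⟩
    · rintro ⟨h1, h2, h3⟩
      exact ⟨h1, fun n hn => (h2 n hn).trans (funext fun g => (hx n hn g).symm),
        fun n hn => (h3 n hn).trans (funext fun g => (hy n hn g).symm)⟩
  obtain ⟨g, hg⟩ := hdiff
  have hpg := congrFun hpat g
  rw [Prod.mk.injEq] at hpg
  -- arithmetic sublemma
  have harith : ∀ (c u v : ℝ) (J1 J2 : ℕ), 0 < c →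
      (J1:ℝ)/c ≤ u → u ≤ (J1:ℝ)/c + c⁻¹ → (J2:ℝ)/c ≤ v → v ≤ (J2:ℝ)/c + c⁻¹ →
      (J1 + 2 ≤ J2 ∨ J2 + 2 ≤ J1) → c⁻¹ ≤ |u - v| := by
    intro c u v J1 J2 hc h1 h2 h3 h4 hJ
    have hcne : c ≠ 0 := hc.ne'
    rcases hJ with h | h
    · have hJR : (J1:ℝ) + 2 ≤ (J2:ℝ) := by exact_mod_cast h
      have hdiv : ((J1:ℝ) + 2)/c ≤ (J2:ℝ)/c := by gcongr
      have hsplit : ((J1:ℝ) + 2)/c = (J1:ℝ)/c + 2*c⁻¹ := by field_simp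
      rw [le_abs]
      right
      linarith
    · have hJR : (J2:ℝ) + 2 ≤ (J1:ℝ) := by exact_mod_cast h
      have hdiv : ((J2:ℝ) + 2)/c ≤ (J1:ℝ)/c := by gcongr
      have hsplit : ((J2:ℝ) + 2)/c = (J2:ℝ)/c + 2*c⁻¹ := by field_simp
      rw [le_abs]
      left
      linarith
  -- the key separation estimate
  have key : ∀ p ∈ PhiSet S a b Ω m l (z i), ∀ q ∈ PhiSet S a b Ω m l (z j),
      (b:ℝ) ^ (-(l:ℤ)) ≤ supPairDist p q := by
    intro p hp q hq
    have hzpow : ((b:ℝ)) ^ (-(l:ℤ)) = ((b:ℝ) ^ l)⁻¹ := by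
      rw [zpow_neg, zpow_natCast]
    have hmax : ((b:ℝ) ^ l)⁻¹ ≤ max |p.1 g - q.1 g| |p.2 g - q.2 g| := by
      rcases hg with hgx | hgy
      · have hmod : Jd a (fun n => ((z i n g).1:ℕ)) N % 2 = Jd a (fun n => ((z j n g).1:ℕ)) N % 2 := by
          have h' := hpg.1
          rwa [ZMod.natCast_eq_natCast_iff, Nat.ModEq] at h'
        have hcases : Jd a (fun n => ((z i n g).1:ℕ)) N + 2 ≤ Jd a (fun n => ((z j n g).1:ℕ)) N ∨
            Jd a (fun n => ((z j n g).1:ℕ)) N + 2 ≤ Jd a (fun n => ((z i n g).1:ℕ)) N := by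
          omega
        obtain ⟨hpl, hpu⟩ := hmemx i p hp g
        obtain ⟨hql, hqu⟩ := hmemx j q hq g
        exact le_trans htb (le_trans
          (harith ((a:ℝ)^N) (p.1 g) (q.1 g) _ _ haNpos hpl hpu hql hqu hcases)
          (le_max_left _ _))
      · have hmod : Jd b (fun n => ((z i n g).2:ℕ)) l % 2 = Jd b (fun n => ((z j n g).2:ℕ)) l % 2 := by
          have h' := hpg.2
          rwa [ZMod.natCast_eq_natCast_iff, Nat.ModEq] at h'
        have hcases : Jd b (fun n => ((z i n g).2:ℕ)) l + 2 ≤ Jd b (fun n => ((z j n g).2:ℕ)) l ∨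
            Jd b (fun n => ((z j n g).2:ℕ)) l + 2 ≤ Jd b (fun n => ((z i n g).2:ℕ)) l := by
          omega
        obtain ⟨hpl, hpu⟩ := hmemy i p hp g
        obtain ⟨hql, hqu⟩ := hmemy j q hq g
        exact le_trans
          (harith ((b:ℝ)^l) (p.2 g) (q.2 g) _ _ hblpos hpl hpu hql hqu hcases)
          (le_max_right _ _)
    rw [hzpow]
    refine le_trans hmax ?_
    simp only [supPairDist]
    exact le_ciSup (Set.Finite.bddAbove (Set.finite_range
      (fun i => max |p.1 i - q.1 i| |p.2 i - q.2 i|))) g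
  -- conclude via le_csInf
  have hself : ∀ i0 : Fin k, z i0 ∈ PsiSet S a b Ω m l (z i0) :=
    fun i0 => ⟨hz i0, fun n _ => rfl, fun n _ => rfl⟩
  have hnei : ∃ p, p ∈ PhiSet S a b Ω m l (z i) := ⟨_, ⟨z i, hself i, rfl⟩⟩
  have hnej : ∃ q, q ∈ PhiSet S a b Ω m l (z j) := ⟨_, ⟨z j, hself j, rfl⟩⟩
  simp only [distInf]
  apply le_csInf
  · obtain ⟨p, hp⟩ := hnei
    obtain ⟨q, hq⟩ := hnej
    exact ⟨supPairDist p q, ⟨p, hp, q, hq, rfl⟩⟩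
  · rintro x ⟨p, hp, q, hq, rfl⟩
    exact key p hp q hq


end MeanDimPaper
end
end
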